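/- (Extension theorem for conic group systems) Let G be a group, let C ⊆ V and D ⊆ W be closed convex cones in finite-dimensional real vector spaces with D sharp, and let ρ: G → GL(V) and σ: G → GL(W) be group homomorphisms with ρ(g)(C) ⊆ C and σ(g)(D) ⊆ D for all g ∈ G. Let X ⊆ V be a linear subspace intersecting the interior of C, and let Ψ: X → W be a linear map with Ψ(C ∩ X) ⊆ D. For a homomorphism τ: G → GL(Z) preserving a convex cone E ⊆ Z, set A(τ,E) := { z ∈ Z : f(z) ≥ 0 for every f ∈ E^∨ with f ∘ τ(g) = f for all g ∈ G }. Let ρ⊗σ* be the representation of G on V ⊗ W' given by g ↦ ρ(g) ⊗ (σ(g⁻¹))', which preserves C ⊗min D^∨, and let σ⊗σ* be the representation on W ⊗ W' given by g ↦ σ(g) ⊗ (σ(g⁻¹))', which preserves D ⊗min D^∨. Then Ψ extends to a linear map Φ: V → W with Φ|_X = Ψ, Φ(C) ⊆ D, and Φ ∘ ρ(g) = σ(g) ∘ Φ for all g ∈ G, if and only if (Ψ ⊗ id_{W'}) maps A(ρ⊗σ*, C ⊗min D^∨) ∩ (X ⊗ W') into A(σ⊗σ*, D ⊗min D^∨).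 -/

import Mathlib

open scoped TensorProduct

noncomputable section

/-- A convex cone: a set closed under addition and multiplication by nonnegative reals. -/
def IsConvexCone {V : Type*} [AddCommGroup V] [Module ℝ V] (C : Set V) : Prop :=
  (∀ x ∈ C, ∀ y ∈ C, x + y ∈ C) ∧ ∀ r : ℝ, 0 ≤ r → ∀ x ∈ C, r • x ∈ C

/-- The dual cone `C^∨ ⊆ V'` of a set `C ⊆ V`. -/
def dualCone {V : Type*} [AddCommGroup V] [Module ℝ V] (C : Set V) :
    Set (Module.Dual ℝ V) := {φ | ∀ c ∈ C, 0 ≤ φ c}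

/-- The minimal tensor product `C ⊗min D = { Σᵢ cᵢ ⊗ dᵢ | cᵢ ∈ C, dᵢ ∈ D }`. -/
def minTensor {V W : Type*} [AddCommGroup V] [Module ℝ V] [AddCommGroup W] [Module ℝ W]
    (C : Set V) (D : Set W) : Set (TensorProduct ℝ V W) :=
  (AddSubmonoid.closure {x | ∃ c ∈ C, ∃ d ∈ D, x = c ⊗ₜ[ℝ] d} : AddSubmonoid _)

/-- For a family of maps `T g : Z → Z` (a `G`-action) and a cone `E ⊆ Z`, the set
`A(T,E) = { z ∈ Z | f(z) ≥ 0 for every f ∈ E^∨ invariant under all T g }`. -/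
def invPosSet {G : Type*} {Z : Type*} [AddCommGroup Z] [Module ℝ Z]
    (T : G → (Z →ₗ[ℝ] Z)) (E : Set Z) : Set Z :=
  {z | ∀ f ∈ dualCone E, (∀ g : G, f ∘ₗ T g = f) → 0 ≤ f z}

section Aux

lemma IsConvexCone.convexSet {V : Type*} [AddCommGroup V] [Module ℝ V] {C : Set V}
    (h : IsConvexCone C) : Convex ℝ C := fun x hx y hy a b ha hb _ =>
  h.1 _ (h.2 a ha x hx) _ (h.2 b hb y hy)

lemma IsConvexCone.zero_mem {V : Type*} [AddCommGroup V] [Module ℝ V] {C : Set V}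
    (h : IsConvexCone C) (hne : C.Nonempty) : (0 : V) ∈ C := by
  obtain ⟨c, hc⟩ := hne
  simpa using h.2 0 le_rfl c hc

lemma mem_dualCone_minTensor {V W : Type*} [AddCommGroup V] [Module ℝ V]
    [AddCommGroup W] [Module ℝ W]
    {C : Set V} {D : Set W} {f : Module.Dual ℝ (TensorProduct ℝ V W)}
    (h : ∀ c ∈ C, ∀ d ∈ D, 0 ≤ f (c ⊗ₜ[ℝ] d)) : f ∈ dualCone (minTensor C D) := by
  intro u hu
  induction hu using AddSubmonoid.closure_induction with
  | mem x hx => obtain ⟨c, hc, d, hd, rfl⟩ := hx; exact h c hc d hd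
  | zero => simp
  | add x y hx hy ihx ihy => simpa [map_add] using add_nonneg ihx ihy

/-- Bipolar theorem: a point on which every element of the dual cone is nonnegative lies in the
closed convex cone. -/
lemma mem_of_forall_dualCone_nonneg {W : Type*} [AddCommGroup W] [Module ℝ W]
    [FiniteDimensional ℝ W]
    [TopologicalSpace W] [IsTopologicalAddGroup W] [ContinuousSMul ℝ W] [T2Space W]
    {D : Set W} (hDc : IsConvexCone D) (hDcl : IsClosed D) (hne : D.Nonempty)
    {w : W} (hw : ∀ φ ∈ dualCone D, 0 ≤ φ w) : w ∈ D := by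
  have h0 : (0 : W) ∈ D := hDc.zero_mem hne
  by_contra hwD
  set n := Module.finrank ℝ W with hn
  let e : W ≃L[ℝ] (Fin n → ℝ) := (Module.finBasis ℝ W).equivFun.toContinuousLinearEquiv
  have hclosed : IsClosed (⇑e '' D) := e.toHomeomorph.isClosedMap D hDcl
  have hconv : Convex ℝ (⇑e '' D) := by
    have := hDc.convexSet.linear_image (e.toLinearEquiv : W →ₗ[ℝ] (Fin n → ℝ))
    simpa using this
  have hnotmem : e w ∉ ⇑e '' D := by
    rintro ⟨d, hd, hdw⟩
    exact hwD (e.injective hdw ▸ hd)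
  obtain ⟨φ, u, hφu, hφb⟩ := geometric_hahn_banach_point_closed hconv hclosed hnotmem
  set g : Module.Dual ℝ W := φ.toLinearMap.comp (e.toLinearEquiv : W →ₗ[ℝ] (Fin n → ℝ)) with hg
  have hgval : ∀ d : W, g d = φ (e d) := fun d => rfl
  have hu0 : u < 0 := by
    have := hφb _ ⟨0, h0, rfl⟩
    simpa using this
  have hgpos : g ∈ dualCone D := by
    intro d hd
    by_contra hlt
    push_neg at hlt
    have ht : 0 < (u - 1) / g d := div_pos_of_neg_of_neg (by linarith) hlt
    have hmem : ((u - 1) / g d) • d ∈ D := hDc.2 _ ht.le d hd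
    have := hφb _ ⟨_, hmem, rfl⟩
    rw [← hgval, map_smul, smul_eq_mul, div_mul_cancel₀ _ (ne_of_lt hlt)] at this
    linarith
  have : 0 ≤ g w := hw g hgpos
  have : g w < u := hφu
  linarith

set_option maxHeartbeats 2000000 in
/-- Extension lemma: if a functional `ℓ` on `U₀` is nonnegative on everything that all
invariant `K`-positive functionals on `U` see as nonnegative (through `j`), then `ℓ`
extends to an invariant `K`-positive functional on `U`.  The element `j y₀ ∈ K` is an
order unit for the positive functionals. -/
lemma ext_cone_lemma {U U₀ : Type*} [AddCommGroup U] [Module ℝ U] [FiniteDimensional ℝ U]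
    [AddCommGroup U₀] [Module ℝ U₀] [FiniteDimensional ℝ U₀] {G : Type*}
    (K : Set U) (T : G → (U →ₗ[ℝ] U)) (j : U₀ →ₗ[ℝ] U) (ℓ : Module.Dual ℝ U₀) (y₀ : U₀)
    (hy₀K : j y₀ ∈ K)
    (hunit : ∀ f : Module.Dual ℝ U, (∀ u ∈ K, 0 ≤ f u) → f (j y₀) = 0 → f = 0)
    (H : ∀ y : U₀, (∀ f : Module.Dual ℝ U, (∀ u ∈ K, 0 ≤ f u) →
      (∀ g, f ∘ₗ T g = f) → 0 ≤ f (j y)) → 0 ≤ ℓ y) :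
    ∃ f : Module.Dual ℝ U, (∀ u ∈ K, 0 ≤ f u) ∧ (∀ g, f ∘ₗ T g = f) ∧ ∀ y, f (j y) = ℓ y := by
  classical
  set n := Module.finrank ℝ (Module.Dual ℝ U) with hnn
  set n₀ := Module.finrank ℝ (Module.Dual ℝ U₀) with hnn0
  set e : Module.Dual ℝ U ≃ₗ[ℝ] (Fin n → ℝ) := (Module.finBasis ℝ (Module.Dual ℝ U)).equivFun
    with he
  set e₀ : Module.Dual ℝ U₀ ≃ₗ[ℝ] (Fin n₀ → ℝ) :=
    (Module.finBasis ℝ (Module.Dual ℝ U₀)).equivFun with he0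
  set q : (Fin n → ℝ) →ₗ[ℝ] (Fin n₀ → ℝ) :=
    e₀.toLinearMap ∘ₗ j.dualMap ∘ₗ e.symm.toLinearMap with hq
  have hqval : ∀ x, q x = e₀ (j.dualMap (e.symm x)) := fun x => rfl
  set P' : Set (Fin n → ℝ) :=
    {x | (∀ u ∈ K, 0 ≤ e.symm x u) ∧ ∀ g, ∀ u, e.symm x (T g u) = e.symm x u} with hP'
  set S : Set (Fin n₀ → ℝ) := ⇑q '' P' with hS
  have contq : Continuous ⇑q := q.continuous_of_finiteDimensional
  have cont : ∀ u : U, Continuous fun x : Fin n → ℝ => e.symm x u := fun u =>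
    ((LinearMap.applyₗ u).comp e.symm.toLinearMap).continuous_of_finiteDimensional
  have cont0 : ∀ y : U₀, Continuous fun x : Fin n₀ → ℝ => e₀.symm x y := fun y =>
    ((LinearMap.applyₗ y).comp e₀.symm.toLinearMap).continuous_of_finiteDimensional
  set ε : (Fin n → ℝ) → ℝ := fun x => e.symm x (j y₀) with hε
  have contε : Continuous ε := cont (j y₀)
  -- P' is a closed convex cone
  have hP'closed : IsClosed P' := by
    have h1 : IsClosed {x : Fin n → ℝ | ∀ u ∈ K, 0 ≤ e.symm x u} := by
      have : {x : Fin n → ℝ | ∀ u ∈ K, 0 ≤ e.symm x u}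
          = ⋂ u ∈ K, {x | 0 ≤ e.symm x u} := by
        ext x; simp
      rw [this]
      exact isClosed_biInter fun u _ => isClosed_le continuous_const (cont u)
    have h2 : IsClosed {x : Fin n → ℝ | ∀ g, ∀ u, e.symm x (T g u) = e.symm x u} := by
      have : {x : Fin n → ℝ | ∀ g, ∀ u, e.symm x (T g u) = e.symm x u}
          = ⋂ g, ⋂ u, {x | e.symm x (T g u) = e.symm x u} := by
        ext x; simp
      rw [this]
      exact isClosed_iInter fun g => isClosed_iInter fun u => isClosed_eq (cont _) (cont _)
    exact h1.inter h2
  have hP'smul : ∀ r : ℝ, 0 ≤ r → ∀ x ∈ P', r • x ∈ P' := by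
    intro r hr x hx
    refine ⟨fun u hu => ?_, fun g u => ?_⟩
    · rw [map_smul]
      exact mul_nonneg hr (hx.1 u hu)
    · rw [map_smul]
      simp only [LinearMap.smul_apply, smul_eq_mul]
      rw [hx.2 g u]
  have hP'add : ∀ x ∈ P', ∀ y ∈ P', x + y ∈ P' := by
    intro x hx y hy
    refine ⟨fun u hu => ?_, fun g u => ?_⟩
    · rw [map_add]
      exact add_nonneg (hx.1 u hu) (hy.1 u hu)
    · rw [map_add]
      simp only [LinearMap.add_apply]
      rw [hx.2 g u, hy.2 g u]
  have hP'conv : Convex ℝ P' := fun x hx y hy a b ha hb _ =>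
    hP'add _ (hP'smul a ha x hx) _ (hP'smul b hb y hy)
  have hSconv : Convex ℝ S := hP'conv.linear_image q
  have hP'0 : (0 : Fin n → ℝ) ∈ P' := by
    refine ⟨fun u hu => by simp, fun g u => by simp⟩
  have hS0 : (0 : Fin n₀ → ℝ) ∈ S := ⟨0, hP'0, map_zero q⟩
  have hSsmul : ∀ s ∈ S, ∀ t : ℝ, 0 ≤ t → t • s ∈ S := by
    rintro s ⟨x, hx, rfl⟩ t ht
    exact ⟨t • x, hP'smul t ht x hx, map_smul q t x⟩
  -- ε is nonnegative on P' and controls the norm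
  have hεnonneg : ∀ x ∈ P', 0 ≤ ε x := fun x hx => hx.1 _ hy₀K
  obtain ⟨δ, hδ, hδb⟩ : ∃ δ : ℝ, 0 < δ ∧ ∀ x ∈ P', δ * ‖x‖ ≤ ε x := by
    by_cases hsp : (Metric.sphere (0 : Fin n → ℝ) 1 ∩ P').Nonempty
    · obtain ⟨x₁, hx₁, hmin⟩ :=
        ((isCompact_sphere (0 : Fin n → ℝ) 1).inter_right hP'closed).exists_isMinOn hsp
          contε.continuousOn
      have hx₁n : ‖x₁‖ = 1 := by simpa using hx₁.1
      have hδpos : 0 < ε x₁ := by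
        rcases lt_or_eq_of_le (hεnonneg x₁ hx₁.2) with h | h
        · exact h
        · exfalso
          have hf0 : e.symm x₁ = 0 := hunit (e.symm x₁) hx₁.2.1 h.symm
          have : x₁ = 0 := by
            have := congrArg e hf0
            simpa using this
          rw [this] at hx₁n
          simp at hx₁n
      refine ⟨ε x₁, hδpos, fun x hx => ?_⟩
      rcases eq_or_ne x 0 with rfl | hx0
      · simp [hε]
      · have hnx : 0 < ‖x‖ := norm_pos_iff.2 hx0
        have hmem : ‖x‖⁻¹ • x ∈ Metric.sphere (0 : Fin n → ℝ) 1 ∩ P' := by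
          constructor
          · simp [norm_smul, abs_of_pos (inv_pos.2 hnx), inv_mul_cancel₀ hnx.ne']
          · exact hP'smul _ (inv_pos.2 hnx).le x hx
        have h5 : ε x₁ ≤ ε (‖x‖⁻¹ • x) := hmin hmem
        have hεs : ε (‖x‖⁻¹ • x) = ‖x‖⁻¹ * ε x := by
          simp [hε, map_smul]
        rw [hεs] at h5
        have h6 := mul_le_mul_of_nonneg_left h5 hnx.le
        have h7 : ‖x‖ * (‖x‖⁻¹ * ε x) = ε x := by field_simp
        rw [h7] at h6
        nlinarith [h6]
    · refine ⟨1, one_pos, fun x hx => ?_⟩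
      rcases eq_or_ne x 0 with rfl | hx0
      · simp [hε]
      · exfalso
        have hnx : 0 < ‖x‖ := norm_pos_iff.2 hx0
        refine hsp ⟨‖x‖⁻¹ • x, ?_, hP'smul _ (inv_pos.2 hnx).le x hx⟩
        simp [norm_smul, abs_of_pos (inv_pos.2 hnx), inv_mul_cancel₀ hnx.ne']
  -- S is closed
  have hSclosed : IsClosed S := by
    refine IsSeqClosed.isClosed ?_
    intro s s₀ hs hlim
    choose x hxP hqx using hs
    have hkey : ∀ k, ε (x k) = e₀.symm (s k) y₀ := by
      intro k
      rw [← hqx k, hqval]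
      simp [hε]
    have hconv2 : Filter.Tendsto (fun k => e₀.symm (s k) y₀) Filter.atTop
        (nhds (e₀.symm s₀ y₀)) := ((cont0 y₀).tendsto s₀).comp hlim
    obtain ⟨M, hM⟩ : ∃ M, ∀ k, ε (x k) ≤ M := by
      obtain ⟨M, hM⟩ := hconv2.isBoundedUnder_le.bddAbove_range
      refine ⟨M, fun k => ?_⟩
      rw [hkey k]
      exact hM ⟨k, rfl⟩
    have hxb : ∀ k, x k ∈ Metric.closedBall (0 : Fin n → ℝ) ((max M 0 + 1) / δ) := by
      intro k
      rw [Metric.mem_closedBall, dist_zero_right]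
      have h1 := hδb (x k) (hxP k)
      have h2 : ε (x k) ≤ max M 0 + 1 := by
        have h3 := hM k
        have h4 := le_max_left M (0:ℝ)
        linarith
      rw [le_div_iff₀ hδ]
      nlinarith [h1, h2]
    obtain ⟨xlim, hxlim, κ, hκmono, hκlim⟩ :=
      (isCompact_closedBall (0 : Fin n → ℝ) _).tendsto_subseq hxb
    refine ⟨xlim, ⟨fun u hu => ?_, fun g u => ?_⟩, ?_⟩
    · have h1 : Filter.Tendsto (fun k => e.symm (x (κ k)) u) Filter.atTop
          (nhds (e.symm xlim u)) := ((cont u).tendsto xlim).comp hκlim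
      exact ge_of_tendsto' h1 fun k => (hxP (κ k)).1 u hu
    · have h1 : Filter.Tendsto (fun k => e.symm (x (κ k)) (T g u)) Filter.atTop
          (nhds (e.symm xlim (T g u))) := ((cont (T g u)).tendsto xlim).comp hκlim
      have h2 : Filter.Tendsto (fun k => e.symm (x (κ k)) u) Filter.atTop
          (nhds (e.symm xlim u)) := ((cont u).tendsto xlim).comp hκlim
      have heq : (fun k => e.symm (x (κ k)) (T g u)) = fun k => e.symm (x (κ k)) u :=
        funext fun k => (hxP (κ k)).2 g u
      rw [heq] at h1
      exact tendsto_nhds_unique h1 h2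
    · have h1 : Filter.Tendsto (fun k => q (x (κ k))) Filter.atTop (nhds (q xlim)) :=
        (contq.tendsto xlim).comp hκlim
      have h2 : Filter.Tendsto (fun k => q (x (κ k))) Filter.atTop (nhds s₀) := by
        have := hlim.comp hκmono.tendsto_atTop
        simpa [Function.comp_def, hqx] using this
      exact tendsto_nhds_unique h1 h2
  -- Hahn–Banach separation
  have hmem : e₀ ℓ ∈ S := by
    by_contra hnot
    obtain ⟨φ, u, hφu, hφb⟩ := geometric_hahn_banach_point_closed hSconv hSclosed hnot
    have hu0 : u < 0 := by simpa using hφb 0 hS0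
    have hφpos : ∀ b ∈ S, 0 ≤ φ b := by
      intro b hb
      by_contra h
      push_neg at h
      have ht : 0 < (u - 1) / φ b := div_pos_of_neg_of_neg (by linarith) h
      have := hφb _ (hSsmul b hb _ ht.le)
      rw [map_smul, smul_eq_mul, div_mul_cancel₀ _ (ne_of_lt h)] at this
      linarith
    set ξ : Module.Dual ℝ (Module.Dual ℝ U₀) := φ.toLinearMap ∘ₗ e₀.toLinearMap with hξ
    set y : U₀ := (Module.evalEquiv ℝ U₀).symm ξ with hy
    have hyval : ∀ m : Module.Dual ℝ U₀, m y = φ (e₀ m) := fun m =>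
      Module.apply_evalEquiv_symm_apply (R := ℝ) (M := U₀) m ξ
    have h1 : ∀ f : Module.Dual ℝ U, (∀ u ∈ K, 0 ≤ f u) →
        (∀ g, f ∘ₗ T g = f) → 0 ≤ f (j y) := by
      intro f hfpos hfinv
      have hfP' : e f ∈ P' := by
        refine ⟨fun u hu => ?_, fun g v => ?_⟩
        · rw [e.symm_apply_apply]; exact hfpos u hu
        · rw [e.symm_apply_apply]; exact LinearMap.congr_fun (hfinv g) v
      have hqS : q (e f) ∈ S := ⟨_, hfP', rfl⟩
      have h2 := hφpos _ hqS
      rw [hqval, e.symm_apply_apply] at h2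
      rw [← hyval (j.dualMap f)] at h2
      exact h2
    have h3 := H y h1
    rw [hyval ℓ] at h3
    linarith
  obtain ⟨x, hxP, hqx⟩ := hmem
  refine ⟨e.symm x, hxP.1, fun g => LinearMap.ext fun u => hxP.2 g u, fun y => ?_⟩
  have : j.dualMap (e.symm x) = ℓ := by
    apply e₀.injective
    rw [← hqval]
    exact hqx
  exact LinearMap.congr_fun this y

lemma dualCone_span {W : Type*} [AddCommGroup W] [Module ℝ W] [FiniteDimensional ℝ W]
    [TopologicalSpace W] [IsTopologicalAddGroup W] [ContinuousSMul ℝ W] [T2Space W]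
    {D : Set W} (hDc : IsConvexCone D) (hDcl : IsClosed D) (hne : D.Nonempty)
    (hDsharp : ∀ x ∈ D, -x ∈ D → x = 0) :
    ∀ ψ : Module.Dual ℝ W, ∃ p ∈ dualCone D, ∃ q ∈ dualCone D, ψ = p - q := by
  have h0 : (0 : Module.Dual ℝ W) ∈ dualCone D := fun c _ => by simp
  set S : Submodule ℝ (Module.Dual ℝ W) :=
    { carrier := {ψ | ∃ p ∈ dualCone D, ∃ q ∈ dualCone D, ψ = p - q}
      add_mem' := by
        rintro a b ⟨p, hp, q, hq, rfl⟩ ⟨p', hp', q', hq', rfl⟩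
        exact ⟨p + p', fun c hc => add_nonneg (hp c hc) (hp' c hc),
               q + q', fun c hc => add_nonneg (hq c hc) (hq' c hc), by abel⟩
      zero_mem' := ⟨0, h0, 0, h0, by simp⟩
      smul_mem' := by
        rintro c a ⟨p, hp, q, hq, rfl⟩
        rcases le_total 0 c with hc | hc
        · exact ⟨c • p, fun d hd => by
              simpa using mul_nonneg hc (hp d hd),
            c • q, fun d hd => by
              simpa using mul_nonneg hc (hq d hd), by rw [smul_sub]⟩
        · refine ⟨(-c) • q, fun d hd => by
              simpa using mul_nonneg (neg_nonneg.2 hc) (hq d hd),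
            (-c) • p, fun d hd => by
              simpa using mul_nonneg (neg_nonneg.2 hc) (hp d hd), ?_⟩
          module } with hSdef
  intro ψ
  by_contra hψ
  have hlt : S < ⊤ := lt_top_iff_ne_top.2 fun htop => hψ (htop ▸ Submodule.mem_top : ψ ∈ S)
  obtain ⟨ξ, hξ0, hξ⟩ := Submodule.exists_dual_map_eq_bot_of_lt_top hlt inferInstance
  set w := (Module.evalEquiv ℝ W).symm ξ with hwdef
  have hwval : ∀ φ : Module.Dual ℝ W, φ w = ξ φ := fun φ =>
    Module.apply_evalEquiv_symm_apply (R := ℝ) (M := W) φ ξ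
  have hzero : ∀ φ ∈ dualCone D, φ w = 0 := by
    intro φ hφ
    have hφS : φ ∈ S := ⟨φ, hφ, 0, h0, by simp⟩
    rw [hwval]
    have hmem : ξ φ ∈ S.map ξ := Submodule.mem_map_of_mem hφS
    rw [hξ] at hmem
    exact (Submodule.mem_bot ℝ).1 hmem
  have hw : w ∈ D := mem_of_forall_dualCone_nonneg hDc hDcl hne
    (fun φ hφ => (hzero φ hφ).ge)
  have hw' : -w ∈ D := mem_of_forall_dualCone_nonneg hDc hDcl hne
    (fun φ hφ => by rw [map_neg, hzero φ hφ, neg_zero])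
  have hw0 : w = 0 := hDsharp w hw hw'
  apply hξ0
  calc ξ = Module.evalEquiv ℝ W w := ((Module.evalEquiv ℝ W).apply_symm_apply ξ).symm
    _ = 0 := by rw [hw0, map_zero]

lemma exists_dualCone_unit {W : Type*} [AddCommGroup W] [Module ℝ W] [FiniteDimensional ℝ W]
    [TopologicalSpace W] [IsTopologicalAddGroup W] [ContinuousSMul ℝ W] [T2Space W]
    {D : Set W} (hDc : IsConvexCone D) (hDcl : IsClosed D) (hne : D.Nonempty)
    (hDsharp : ∀ x ∈ D, -x ∈ D → x = 0) :
    ∃ eD ∈ dualCone D, ∀ ψ : Module.Dual ℝ W, ∃ t : ℝ, 0 < t ∧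
      eD + t • ψ ∈ dualCone D := by
  classical
  have hspan := dualCone_span hDc hDcl hne hDsharp
  set b := Module.finBasis ℝ (Module.Dual ℝ W) with hb
  choose p hp q hq hpq using fun i => hspan (b i)
  refine ⟨∑ i, (p i + q i), ?_, ?_⟩
  · intro c hc
    have hs : (∑ i, (p i + q i)) c = ∑ i, ((p i) c + (q i) c) := by
      simp
    rw [hs]
    exact Finset.sum_nonneg fun i _ => add_nonneg (hp i c hc) (hq i c hc)
  · intro ψ
    set a : Fin (Module.finrank ℝ (Module.Dual ℝ W)) → ℝ := fun i => b.repr ψ i with ha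
    have hψ : ψ = ∑ i, a i • b i := (b.sum_repr ψ).symm
    set t : ℝ := (1 + ∑ i, |a i|)⁻¹ with htdef
    have hsum : 0 ≤ ∑ i, |a i| := Finset.sum_nonneg fun i _ => abs_nonneg _
    have ht : 0 < t := inv_pos.2 (by linarith)
    have hta : ∀ i, t * |a i| ≤ 1 := by
      intro i
      have h1 : |a i| ≤ 1 + ∑ j, |a j| := by
        have := Finset.single_le_sum (f := fun j => |a j|)
          (fun j _ => abs_nonneg _) (Finset.mem_univ i)
        linarith
      calc t * |a i| ≤ t * (1 + ∑ j, |a j|) := mul_le_mul_of_nonneg_left h1 ht.le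
        _ = 1 := inv_mul_cancel₀ (by linarith)
    refine ⟨t, ht, fun c hc => ?_⟩
    have h2' : ψ c = ∑ i, a i * ((p i) c - (q i) c) := by
      conv_lhs => rw [hψ]
      simp [hpq, smul_eq_mul]
    have hval : (∑ i, (p i + q i) + t • ψ) c
        = ∑ i, ((p i) c + (q i) c + t * (a i * ((p i) c - (q i) c))) := by
      rw [LinearMap.add_apply, LinearMap.smul_apply, smul_eq_mul, h2', Finset.mul_sum]
      have hs : (∑ i, (p i + q i)) c = ∑ i, ((p i) c + (q i) c) := by simp
      rw [hs, ← Finset.sum_add_distrib]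
    rw [hval]
    refine Finset.sum_nonneg fun i _ => ?_
    have h1 := hp i c hc
    have h2 := hq i c hc
    have h3 := hta i
    have h4a : t * a i ≤ 1 := le_trans (mul_le_mul_of_nonneg_left (le_abs_self (a i)) ht.le) h3
    have h4b : -1 ≤ t * a i := by nlinarith [mul_le_mul_of_nonneg_left (neg_abs_le (a i)) ht.le]
    nlinarith [mul_nonneg (by linarith : (0:ℝ) ≤ 1 + t * a i) h1,
               mul_nonneg (by linarith : (0:ℝ) ≤ 1 - t * a i) h2]

end Aux

set_option maxHeartbeats 4000000 in
/-- extension theorem for conic group systems: with representations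
`ρ : G → GL(V)`, `σ : G → GL(W)` preserving closed convex cones `C`, `D` (`D` sharp), a
subspace `X` meeting the interior of `C` and `Ψ : X → W` positive on `C ∩ X`, the map `Ψ`
has a positive equivariant extension `Φ : V → W` iff `Ψ ⊗ id_{W'}` maps
`A(ρ⊗σ*, C ⊗min D^∨) ∩ (X ⊗ W')` into `A(σ⊗σ*, D ⊗min D^∨)`. -/
theorem extension_conic_group_systems {G V W : Type*} [Group G]
    [AddCommGroup V] [Module ℝ V] [FiniteDimensional ℝ V]
    [TopologicalSpace V] [IsTopologicalAddGroup V] [ContinuousSMul ℝ V] [T2Space V]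
    [AddCommGroup W] [Module ℝ W] [FiniteDimensional ℝ W]
    [TopologicalSpace W] [IsTopologicalAddGroup W] [ContinuousSMul ℝ W] [T2Space W]
    (C : Set V) (D : Set W) (hCc : IsConvexCone C) (hDc : IsConvexCone D)
    (hCcl : IsClosed C) (hDcl : IsClosed D)
    (hDsharp : ∀ x ∈ D, -x ∈ D → x = 0)
    (ρ : G →* (V ≃ₗ[ℝ] V)) (σ : G →* (W ≃ₗ[ℝ] W))
    (hρ : ∀ g : G, ∀ c ∈ C, ρ g c ∈ C) (hσ : ∀ g : G, ∀ d ∈ D, σ g d ∈ D)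
    (X : Submodule ℝ V) (hX : ∃ x ∈ (X : Set V), x ∈ interior C)
    (Ψ : X →ₗ[ℝ] W) (hΨ : ∀ x : X, (x : V) ∈ C → Ψ x ∈ D) :
    (∃ Φ : V →ₗ[ℝ] W, (∀ x : X, Φ x = Ψ x) ∧ (∀ c ∈ C, Φ c ∈ D) ∧
        ∀ g : G, Φ ∘ₗ (ρ g : V →ₗ[ℝ] V) = (σ g : W →ₗ[ℝ] W) ∘ₗ Φ) ↔
      ∀ y : TensorProduct ℝ X (Module.Dual ℝ W),
        TensorProduct.map X.subtype LinearMap.id y ∈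
          invPosSet
            (fun g : G => TensorProduct.map (ρ g : V →ₗ[ℝ] V)
              ((σ g⁻¹ : W →ₗ[ℝ] W).dualMap))
            (minTensor C (dualCone D)) →
        TensorProduct.map Ψ LinearMap.id y ∈
          invPosSet
            (fun g : G => TensorProduct.map (σ g : W →ₗ[ℝ] W)
              ((σ g⁻¹ : W →ₗ[ℝ] W).dualMap))
            (minTensor D (dualCone D)) := by
  classical
  constructor
  · rintro ⟨Φ, hΦX, hΦC, hΦeq⟩ y hy f hf hfinv
    set f' : Module.Dual ℝ (TensorProduct ℝ V (Module.Dual ℝ W)) :=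
      f ∘ₗ TensorProduct.map Φ LinearMap.id with hf'def
    have hf'pos : f' ∈ dualCone (minTensor C (dualCone D)) :=
      mem_dualCone_minTensor fun c hc d hd => by
        have hmem : (Φ c) ⊗ₜ[ℝ] d ∈ minTensor D (dualCone D) :=
          AddSubmonoid.subset_closure ⟨Φ c, hΦC c hc, d, hd, rfl⟩
        have h0 := hf _ hmem
        simpa [hf'def, TensorProduct.map_tmul] using h0
    have hf'inv : ∀ g : G, f' ∘ₗ TensorProduct.map (ρ g : V →ₗ[ℝ] V)
        ((σ g⁻¹ : W →ₗ[ℝ] W).dualMap) = f' := by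
      intro g
      have hcomm : TensorProduct.map Φ LinearMap.id ∘ₗ
          TensorProduct.map (ρ g : V →ₗ[ℝ] V) ((σ g⁻¹ : W →ₗ[ℝ] W).dualMap)
          = TensorProduct.map (σ g : W →ₗ[ℝ] W) ((σ g⁻¹ : W →ₗ[ℝ] W).dualMap) ∘ₗ
            TensorProduct.map Φ LinearMap.id := by
        rw [← TensorProduct.map_comp, ← TensorProduct.map_comp, hΦeq g,
          LinearMap.id_comp, LinearMap.comp_id]
      rw [hf'def, LinearMap.comp_assoc, hcomm, ← LinearMap.comp_assoc, hfinv g]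
    have h0 := hy f' hf'pos hf'inv
    have hcomp : f' ∘ₗ TensorProduct.map X.subtype LinearMap.id
        = f ∘ₗ TensorProduct.map Ψ LinearMap.id := by
      rw [hf'def, LinearMap.comp_assoc, ← TensorProduct.map_comp, LinearMap.id_comp]
      have hsub : Φ ∘ₗ X.subtype = Ψ := LinearMap.ext hΦX
      rw [hsub]
    have h1 := LinearMap.congr_fun hcomp y
    simp only [LinearMap.comp_apply] at h1
    rw [← h1]
    exact h0
  · intro hcond
    obtain ⟨x₀, hx₀X, hx₀int⟩ := hX
    have hx₀C : x₀ ∈ C := interior_subset hx₀int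
    have hDne : D.Nonempty := ⟨Ψ ⟨x₀, hx₀X⟩, hΨ ⟨x₀, hx₀X⟩ hx₀C⟩
    obtain ⟨eD, heD, heDunit⟩ := exists_dualCone_unit hDc hDcl hDne hDsharp
    have hx₀pm : ∀ v : V, ∃ t : ℝ, 0 < t ∧ x₀ + t • v ∈ C ∧ x₀ - t • v ∈ C := by
      intro v
      have hcont : Continuous fun s : ℝ => x₀ + s • v :=
        continuous_const.add (continuous_id.smul continuous_const)
      have hmem0 : (fun s : ℝ => x₀ + s • v) 0 ∈ interior C := by simpa using hx₀int
      have h1 : (fun s : ℝ => x₀ + s • v) ⁻¹' interior C ∈ nhds (0 : ℝ) :=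
        hcont.continuousAt.preimage_mem_nhds (isOpen_interior.mem_nhds hmem0)
      obtain ⟨δ, hδ, hball⟩ := Metric.mem_nhds_iff.1 h1
      refine ⟨δ / 2, by linarith, ?_, ?_⟩
      · have hb : (δ/2 : ℝ) ∈ Metric.ball (0:ℝ) δ := by
          rw [Metric.mem_ball, Real.dist_eq, sub_zero, abs_of_pos (by linarith)]
          linarith
        exact interior_subset (hball hb)
      · have hb : (-(δ/2) : ℝ) ∈ Metric.ball (0:ℝ) δ := by
          rw [Metric.mem_ball, Real.dist_eq, sub_zero, abs_neg, abs_of_pos (by linarith)]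
          linarith
        have h2 := interior_subset (hball hb)
        simpa [sub_eq_add_neg, neg_smul] using h2
    set jmap : TensorProduct ℝ X (Module.Dual ℝ W) →ₗ[ℝ] TensorProduct ℝ V (Module.Dual ℝ W) :=
      TensorProduct.map X.subtype LinearMap.id with hjdef
    set ℓ : Module.Dual ℝ (TensorProduct ℝ X (Module.Dual ℝ W)) :=
      TensorProduct.lift ((Module.Dual.eval ℝ W) ∘ₗ Ψ) with hℓdef
    have hℓval : ∀ (x : X) (φ : Module.Dual ℝ W), ℓ (x ⊗ₜ[ℝ] φ) = φ (Ψ x) := by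
      intro x φ
      simp [hℓdef]
    set y₀ : TensorProduct ℝ X (Module.Dual ℝ W) := (⟨x₀, hx₀X⟩ : X) ⊗ₜ[ℝ] eD with hy₀def
    have hjtmul : ∀ (x : X) (φ : Module.Dual ℝ W), jmap (x ⊗ₜ[ℝ] φ) = (x : V) ⊗ₜ[ℝ] φ := by
      intro x φ
      simp [hjdef]
    have hjy₀ : jmap y₀ = x₀ ⊗ₜ[ℝ] eD := by rw [hy₀def, hjtmul]
    have hy₀K : jmap y₀ ∈ minTensor C (dualCone D) := by
      rw [hjy₀]
      exact AddSubmonoid.subset_closure ⟨x₀, hx₀C, eD, heD, rfl⟩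
    have hunit : ∀ f : Module.Dual ℝ (TensorProduct ℝ V (Module.Dual ℝ W)),
        (∀ u ∈ minTensor C (dualCone D), 0 ≤ f u) → f (jmap y₀) = 0 → f = 0 := by
      intro f hfpos hf0
      rw [hjy₀] at hf0
      have hgen : ∀ c ∈ C, ∀ φ ∈ dualCone D, 0 ≤ f (c ⊗ₜ[ℝ] φ) := fun c hc φ hφ =>
        hfpos _ (AddSubmonoid.subset_closure ⟨c, hc, φ, hφ, rfl⟩)
      have key1 : ∀ φ ∈ dualCone D, f (x₀ ⊗ₜ[ℝ] φ) = 0 := by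
        intro φ hφ
        obtain ⟨t, ht, hmem⟩ := heDunit (-φ)
        have h1 : 0 ≤ f (x₀ ⊗ₜ[ℝ] (eD + t • (-φ))) := hgen x₀ hx₀C _ hmem
        have hrw : x₀ ⊗ₜ[ℝ] (eD + t • (-φ)) = x₀ ⊗ₜ[ℝ] eD - t • (x₀ ⊗ₜ[ℝ] φ) := by
          rw [smul_neg, TensorProduct.tmul_add, TensorProduct.tmul_neg,
            TensorProduct.tmul_smul, sub_eq_add_neg]
        rw [hrw, map_sub, map_smul, hf0] at h1
        have h2 := hgen x₀ hx₀C φ hφ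
        simp only [smul_eq_mul] at h1
        nlinarith
      have key2 : ∀ (v : V), ∀ φ ∈ dualCone D, f (v ⊗ₜ[ℝ] φ) = 0 := by
        intro v φ hφ
        obtain ⟨t, ht, hp, hm⟩ := hx₀pm v
        have h1 := hgen _ hp φ hφ
        have h2 := hgen _ hm φ hφ
        rw [TensorProduct.add_tmul, ← TensorProduct.smul_tmul', map_add, map_smul,
          key1 φ hφ] at h1
        rw [TensorProduct.sub_tmul, ← TensorProduct.smul_tmul', map_sub, map_smul,
          key1 φ hφ] at h2
        simp only [smul_eq_mul, zero_add, zero_sub] at h1 h2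
        nlinarith
      have key3 : ∀ (v : V) (φ : Module.Dual ℝ W), f (v ⊗ₜ[ℝ] φ) = 0 := by
        intro v φ
        obtain ⟨p, hp, q, hq, rfl⟩ := dualCone_span hDc hDcl hDne hDsharp φ
        rw [TensorProduct.tmul_sub, map_sub, key2 v p hp, key2 v q hq, sub_zero]
      exact TensorProduct.ext' fun v φ => by rw [key3 v φ]; simp
    have hH : ∀ y : TensorProduct ℝ X (Module.Dual ℝ W),
        (∀ f : Module.Dual ℝ (TensorProduct ℝ V (Module.Dual ℝ W)),
          (∀ u ∈ minTensor C (dualCone D), 0 ≤ f u) →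
          (∀ g : G, f ∘ₗ TensorProduct.map (ρ g : V →ₗ[ℝ] V)
            ((σ g⁻¹ : W →ₗ[ℝ] W).dualMap) = f) →
          0 ≤ f (jmap y)) → 0 ≤ ℓ y := by
      intro y hy
      have hmem : jmap y ∈ invPosSet
          (fun g : G => TensorProduct.map (ρ g : V →ₗ[ℝ] V)
            ((σ g⁻¹ : W →ₗ[ℝ] W).dualMap)) (minTensor C (dualCone D)) :=
        fun f hf hfinv => hy f hf hfinv
      have h2 := hcond y hmem
      set ev : Module.Dual ℝ (TensorProduct ℝ W (Module.Dual ℝ W)) :=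
        TensorProduct.lift (Module.Dual.eval ℝ W) with hevdef
      have hevval : ∀ (w : W) (φ : Module.Dual ℝ W), ev (w ⊗ₜ[ℝ] φ) = φ w := by
        intro w φ
        simp [hevdef]
      have hevpos : ev ∈ dualCone (minTensor D (dualCone D)) :=
        mem_dualCone_minTensor fun d hd φ hφ => by rw [hevval]; exact hφ d hd
      have hevinv : ∀ g : G, ev ∘ₗ TensorProduct.map (σ g : W →ₗ[ℝ] W)
          ((σ g⁻¹ : W →ₗ[ℝ] W).dualMap) = ev := by
        intro g
        apply TensorProduct.ext'
        intro w φ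
        simp only [LinearMap.comp_apply, TensorProduct.map_tmul]
        rw [hevval, hevval, LinearMap.dualMap_apply]
        have h5 : σ g⁻¹ * σ g = 1 := by rw [← map_mul]; simp
        have h6 : (σ g⁻¹ : W →ₗ[ℝ] W) ((σ g : W →ₗ[ℝ] W) w) = w := by
          calc (σ g⁻¹ : W →ₗ[ℝ] W) ((σ g : W →ₗ[ℝ] W) w)
              = (σ g⁻¹ * σ g) w := rfl
            _ = w := by rw [h5]; rfl
        rw [h6]
      have h3 := h2 ev hevpos hevinv
      have h4 : ℓ = ev ∘ₗ TensorProduct.map Ψ LinearMap.id := by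
        apply TensorProduct.ext'
        intro x φ
        simp only [LinearMap.comp_apply, TensorProduct.map_tmul, LinearMap.id_coe, id_eq]
        rw [hℓval, hevval]
      rw [h4]
      exact h3
    obtain ⟨f, hfpos, hfinv, hfj⟩ := ext_cone_lemma (minTensor C (dualCone D))
      (fun g : G => TensorProduct.map (ρ g : V →ₗ[ℝ] V) ((σ g⁻¹ : W →ₗ[ℝ] W).dualMap))
      jmap ℓ y₀ hy₀K hunit hH
    set Φ : V →ₗ[ℝ] W :=
      (Module.evalEquiv ℝ W).symm.toLinearMap ∘ₗ TensorProduct.curry f with hΦdef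
    have hΦval : ∀ (v : V) (φ : Module.Dual ℝ W), φ (Φ v) = f (v ⊗ₜ[ℝ] φ) := by
      intro v φ
      rw [hΦdef]
      simp only [LinearMap.comp_apply, LinearEquiv.coe_coe]
      rw [Module.apply_evalEquiv_symm_apply]
      simp [TensorProduct.curry_apply]
    refine ⟨Φ, ?_, ?_, ?_⟩
    · intro x
      have hzero : ∀ φ : Module.Dual ℝ W, φ (Φ x - Ψ x) = 0 := by
        intro φ
        rw [map_sub, hΦval]
        have h5 : f (jmap (x ⊗ₜ[ℝ] φ)) = ℓ (x ⊗ₜ[ℝ] φ) := hfj _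
        rw [hjtmul] at h5
        rw [h5, hℓval, sub_self]
      have h6 := (Module.forall_dual_apply_eq_zero_iff ℝ (Φ x - Ψ x)).1 hzero
      exact sub_eq_zero.1 h6
    · intro c hc
      apply mem_of_forall_dualCone_nonneg hDc hDcl hDne
      intro φ hφ
      rw [hΦval]
      exact hfpos _ (AddSubmonoid.subset_closure ⟨c, hc, φ, hφ, rfl⟩)
    · intro g
      apply LinearMap.ext
      intro v
      simp only [LinearMap.comp_apply]
      have hgg : ∀ w : W, (σ g : W →ₗ[ℝ] W) ((σ g⁻¹ : W →ₗ[ℝ] W) w) = w := by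
        intro w
        have h5 : σ g * σ g⁻¹ = 1 := by rw [← map_mul]; simp
        calc (σ g : W →ₗ[ℝ] W) ((σ g⁻¹ : W →ₗ[ℝ] W) w) = (σ g * σ g⁻¹) w := rfl
          _ = w := by rw [h5]; rfl
      have h6 : ∀ φ : Module.Dual ℝ W,
          φ ((σ g⁻¹ : W →ₗ[ℝ] W) (Φ ((ρ g : V →ₗ[ℝ] V) v)) - Φ v) = 0 := by
        intro φ
        rw [map_sub]
        have h7 := LinearMap.congr_fun (hfinv g) (v ⊗ₜ[ℝ] φ)
        simp only [LinearMap.comp_apply, TensorProduct.map_tmul] at h7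
        rw [← hΦval, ← hΦval, LinearMap.dualMap_apply] at h7
        rw [← h7]
        simp
      have h8 : (σ g⁻¹ : W →ₗ[ℝ] W) (Φ ((ρ g : V →ₗ[ℝ] V) v)) = Φ v :=
        sub_eq_zero.1 ((Module.forall_dual_apply_eq_zero_iff ℝ _).1 h6)
      calc Φ ((ρ g : V →ₗ[ℝ] V) v)
          = (σ g : W →ₗ[ℝ] W) ((σ g⁻¹ : W →ₗ[ℝ] W) (Φ ((ρ g : V →ₗ[ℝ] V) v))) :=
            (hgg _).symm
        _ = (σ g : W →ₗ[ℝ] W) (Φ v) := by rw [h8]
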